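/- Let I ⊆ ℝ be a nondegenerate interval and let X ⊆ I be a set such that λ(X ∩ J) = 0 for some nonempty open interval J ⊆ I, where λ denotes Lebesgue measure. Then there exists a sequence of continuous functions f₁ ≤ f₂ ≤ ⋯ on I which is not a max-family, although I_f ⊇ X. -/

import Mathlib

open Set Filter Topology MeasureTheory

/-- `limSet I f` is the set `I_f = {x ∈ I : lim_{n→∞} f_n(x) = +∞}`. -/
def limSet (I : Set ℝ) (f : ℕ → ℝ → ℝ) : Set ℝ :=
  {x ∈ I | Tendsto (fun n => f n x) atTop atTop}

/-- If `X ⊆ I` satisfies `λ(X ∩ J) = 0` for some nonempty open interval `J ⊆ I`, then there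
is a nondecreasing sequence of continuous functions on `I` which is not a max-family
although `I_f ⊇ X`. -/
theorem stmt_6 (I : Set ℝ) (hI : I.OrdConnected) (hInt : I.Nontrivial)
    (X : Set ℝ) (hXI : X ⊆ I)
    (hJ : ∃ a b : ℝ, a < b ∧ Ioo a b ⊆ I ∧ volume (X ∩ Ioo a b) = 0) :
    ∃ f : ℕ → ℝ → ℝ, (∀ n, ContinuousOn (f n) I) ∧
      (∀ n, ∀ x ∈ I, f n x ≤ f (n + 1) x) ∧
      X ⊆ limSet I f ∧
      ¬ (∀ x ∈ I, ∀ y ∈ I, x < y →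
        Tendsto (fun n => ∫ t in x..y, f n t) atTop atTop) := by
  obtain ⟨a, b, hab, hIoo, hX0⟩ := hJ
  set c : ℝ := a + (b - a) / 3 with hc
  set d : ℝ := b - (b - a) / 3 with hd
  have hac : a < c := by simp only [hc]; linarith
  have hcd : c < d := by simp only [hc, hd]; linarith
  have hdb : d < b := by simp only [hd]; linarith
  -- choose open sets of small measure covering X ∩ Ioo a b
  have hcover : ∀ k : ℕ, ∃ U : Set ℝ, X ∩ Ioo a b ⊆ U ∧ IsOpen U ∧
      volume U < (2 : ENNReal)⁻¹ ^ k := by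
    intro k
    apply Set.exists_isOpen_lt_of_lt
    rw [hX0]
    exact ENNReal.pow_pos (by norm_num) k
  choose U hUsub hUopen hUvol using hcover
  have hUne : ∀ k, ((U k)ᶜ : Set ℝ).Nonempty := by
    intro k
    rw [Set.nonempty_compl]
    intro h
    have hv := hUvol k
    rw [h, Real.volume_univ] at hv
    exact not_top_lt hv
  -- the building blocks
  set ψ : ℕ → ℕ → ℝ → ℝ := fun k n x => min 1 ((n : ℝ) * Metric.infDist x (U k)ᶜ) with hψ
  set f : ℕ → ℝ → ℝ := fun n x =>
    (n : ℝ) * Metric.infDist x (Icc c d) + ∑ k ∈ Finset.range n, ψ k n x with hf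
  have hψnn : ∀ k n x, 0 ≤ ψ k n x := by
    intro k n x
    exact le_min zero_le_one (mul_nonneg (Nat.cast_nonneg n) Metric.infDist_nonneg)
  have hψ_le : ∀ k n x, ψ k n x ≤ ψ k (n + 1) x := by
    intro k n x
    refine min_le_min le_rfl (mul_le_mul_of_nonneg_right ?_ Metric.infDist_nonneg)
    exact_mod_cast Nat.le_succ n
  have hmono : ∀ x, Monotone fun n => f n x := by
    intro x
    apply monotone_nat_of_le_succ
    intro n
    simp only [hf]
    gcongr
    · exact Metric.infDist_nonneg
    · exact_mod_cast Nat.le_succ n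
    · calc ∑ k ∈ Finset.range n, ψ k n x ≤ ∑ k ∈ Finset.range n, ψ k (n + 1) x :=
            Finset.sum_le_sum fun k _ => hψ_le k n x
        _ ≤ ∑ k ∈ Finset.range (n + 1), ψ k (n + 1) x :=
            Finset.sum_le_sum_of_subset_of_nonneg
              (Finset.range_subset_range.mpr (Nat.le_succ n)) fun k _ _ => hψnn k (n + 1) x
  have hcont : ∀ n, Continuous (f n) := by
    intro n
    apply Continuous.add
    · exact continuous_const.mul (Metric.continuous_infDist_pt _)
    · exact continuous_finset_sum _ fun k _ =>
        continuous_const.min (continuous_const.mul (Metric.continuous_infDist_pt _))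
  have hIccIoo : Icc c d ⊆ Ioo a b := fun t ht => ⟨lt_of_lt_of_le hac ht.1, lt_of_le_of_lt ht.2 hdb⟩
  refine ⟨f, fun n => (hcont n).continuousOn, fun n x _ => hmono x (Nat.le_succ n), ?_, ?_⟩
  · -- X ⊆ limSet I f
    intro x hx
    refine ⟨hXI hx, ?_⟩
    apply tendsto_atTop_atTop_of_monotone (hmono x)
    intro M
    by_cases hxcd : x ∈ Icc c d
    · -- x is covered by all U k
      have hxU : ∀ k, x ∈ U k := fun k => hUsub k ⟨hx, hIccIoo hxcd⟩
      have hdk : ∀ k, 0 < Metric.infDist x (U k)ᶜ := by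
        intro k
        exact ((hUopen k).isClosed_compl.notMem_iff_infDist_pos (hUne k)).1
          (by simpa using hxU k)
      set K := ⌈M⌉₊ with hK
      set n := max K (Finset.sup (Finset.range K)
        fun k => ⌈(Metric.infDist x (U k)ᶜ)⁻¹⌉₊) with hn
      refine ⟨n, ?_⟩
      have hone : ∀ k ∈ Finset.range K, ψ k n x = 1 := by
        intro k hk
        have h0 : (Finset.range K).sup
            (fun k => ⌈(Metric.infDist x (U k)ᶜ)⁻¹⌉₊) ≤ n := le_max_right _ _
        have h1 : ⌈(Metric.infDist x (U k)ᶜ)⁻¹⌉₊ ≤ n := le_trans (Finset.le_sup (f := fun k => ⌈(Metric.infDist x (U k)ᶜ)⁻¹⌉₊) hk) h0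
        have h2 : (Metric.infDist x (U k)ᶜ)⁻¹ ≤ (n : ℝ) :=
          le_trans (Nat.le_ceil _) (by exact_mod_cast h1)
        have h3 : (1 : ℝ) ≤ (n : ℝ) * Metric.infDist x (U k)ᶜ := by
          have := mul_le_mul_of_nonneg_right h2 (hdk k).le
          rwa [inv_mul_cancel₀ (hdk k).ne'] at this
        exact min_eq_left h3
      calc M ≤ (K : ℝ) := Nat.le_ceil M
        _ = ∑ k ∈ Finset.range K, (1 : ℝ) := by simp
        _ = ∑ k ∈ Finset.range K, ψ k n x := (Finset.sum_congr rfl hone).symm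
        _ ≤ ∑ k ∈ Finset.range n, ψ k n x :=
            Finset.sum_le_sum_of_subset_of_nonneg
              (Finset.range_subset_range.mpr (le_max_left _ _)) fun k _ _ => hψnn k n x
        _ ≤ f n x := by
            simp only [hf]
            have : 0 ≤ (n : ℝ) * Metric.infDist x (Icc c d) := mul_nonneg (Nat.cast_nonneg n) Metric.infDist_nonneg
            linarith
    · -- x is outside [c, d], the linear term blows up
      have hθ : 0 < Metric.infDist x (Icc c d) :=
        (isClosed_Icc.notMem_iff_infDist_pos (nonempty_Icc.mpr hcd.le)).1 hxcd
      refine ⟨⌈M / Metric.infDist x (Icc c d)⌉₊, ?_⟩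
      have h2 : M / Metric.infDist x (Icc c d) ≤ (⌈M / Metric.infDist x (Icc c d)⌉₊ : ℝ) :=
        Nat.le_ceil _
      have h3 : M ≤ (⌈M / Metric.infDist x (Icc c d)⌉₊ : ℝ) * Metric.infDist x (Icc c d) := by
        have := mul_le_mul_of_nonneg_right h2 hθ.le
        rwa [div_mul_cancel₀ _ hθ.ne'] at this
      have h4 : 0 ≤ ∑ k ∈ Finset.range ⌈M / Metric.infDist x (Icc c d)⌉₊,
          ψ k ⌈M / Metric.infDist x (Icc c d)⌉₊ x :=
        Finset.sum_nonneg fun k _ => hψnn _ _ x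
      simp only [hf]
      linarith
  · -- not a max-family: the integral over [c, d] stays bounded
    intro h
    have hcI : c ∈ I := hIoo ⟨hac, lt_trans hcd hdb⟩
    have hdI : d ∈ I := hIoo ⟨lt_trans hac hcd, hdb⟩
    have htend := h c hcI d hdI hcd
    -- bound the integrals uniformly
    have hbound : ∀ n, (∫ t in c..d, f n t) ≤ 2 := by
      intro n
      have hcongr : (∫ t in c..d, f n t) = ∫ t in c..d, ∑ k ∈ Finset.range n, ψ k n t := by
        apply intervalIntegral.integral_congr
        intro t ht
        rw [Set.uIcc_of_le hcd.le] at ht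
        simp only [hf, Metric.infDist_zero_of_mem ht, mul_zero, zero_add]
      rw [hcongr]
      have hintble : ∀ k ∈ Finset.range n, IntervalIntegrable (ψ k n) volume c d :=
        fun k _ => (continuous_const.min
          (continuous_const.mul (Metric.continuous_infDist_pt _))).intervalIntegrable c d
      rw [intervalIntegral.integral_finset_sum hintble]
      have hterm : ∀ k ∈ Finset.range n, (∫ t in c..d, ψ k n t) ≤ (1 / 2 : ℝ) ^ k := by
        intro k _
        rw [intervalIntegral.integral_of_le hcd.le]
        have hle : ∀ t ∈ Ioc c d, ψ k n t ≤ (U k).indicator (fun _ => (1 : ℝ)) t := by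
          intro t _
          by_cases htU : t ∈ U k
          · rw [Set.indicator_of_mem htU]
            exact min_le_left _ _
          · rw [Set.indicator_of_notMem htU]
            have : Metric.infDist t (U k)ᶜ = 0 := Metric.infDist_zero_of_mem htU
            simp [hψ, this]
        have hint1 : IntegrableOn (ψ k n) (Ioc c d) volume :=
          ((continuous_const.min
            (continuous_const.mul (Metric.continuous_infDist_pt _)))).integrableOn_Ioc
        have hint2 : IntegrableOn ((U k).indicator (fun _ => (1 : ℝ))) (Ioc c d) volume := by
          apply MeasureTheory.IntegrableOn.indicator _ (hUopen k).measurableSet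
          exact (integrableOn_const_iff).mpr (Or.inr measure_Ioc_lt_top)
        calc (∫ t in Ioc c d, ψ k n t)
            ≤ ∫ t in Ioc c d, (U k).indicator (fun _ => (1 : ℝ)) t :=
              setIntegral_mono_on hint1 hint2 measurableSet_Ioc hle
          _ = ∫ t in Ioc c d ∩ U k, (1 : ℝ) :=
              setIntegral_indicator (hUopen k).measurableSet
          _ = (volume (Ioc c d ∩ U k)).toReal := by simp [Measure.real]
          _ ≤ ((2 : ENNReal)⁻¹ ^ k).toReal := by
              apply ENNReal.toReal_mono
              · simp [ENNReal.inv_ne_top]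
              · exact le_trans (measure_mono Set.inter_subset_right) (hUvol k).le
          _ = (1 / 2 : ℝ) ^ k := by
              simp [ENNReal.toReal_pow, ENNReal.toReal_inv]
      calc (∑ k ∈ Finset.range n, ∫ t in c..d, ψ k n t)
          ≤ ∑ k ∈ Finset.range n, (1 / 2 : ℝ) ^ k := Finset.sum_le_sum hterm
        _ ≤ 2 := sum_geometric_two_le n
    obtain ⟨n, hn⟩ := (htend.eventually_ge_atTop 3).exists
    linarith [hbound n]
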